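/- Define x : ℕ → ℝ recursively by x₀ = 1 and xₙ = −∑_{j=1}^{n} ((−1)^j/(j!)²) · x_{n−j} for n ≥ 1, and let r₀ := inf{t > 0 : ∑_{j=0}^∞ (−1)^j t^j/(j!)² = 0}. Then for every s with 0 ≤ s < r₀, the series ∑_{n=0}^∞ xₙ sⁿ converges (i.e. the function n ↦ xₙ sⁿ is summable). -/

import Mathlib

open BigOperators

/-- `r₀` is the first positive zero of `t ↦ ∑_{j≥0} (−1)^j t^j/(j!)² = J₀(2√t)`. -/
noncomputable def r₀ : ℝ :=
  sInf {t : ℝ | 0 < t ∧ (∑' j : ℕ, ((-1 : ℝ) ^ j * t ^ j / ((j.factorial : ℝ)) ^ 2)) = 0}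

open Finset
open scoped ENNReal NNReal


lemma alt_key (l : ℕ) (t : ℕ → ℝ) :
    ∑ i ∈ Finset.range (l+2), (-1:ℝ)^i * t i
      = (t 0 - t 1) + ∑ i ∈ Finset.range l, (-1:ℝ)^i * t (i+2) := by
  rw [Finset.sum_range_succ' (fun i => (-1:ℝ)^i * t i) (l+1),
    Finset.sum_range_succ' (fun i => (-1:ℝ)^(i+1) * t (i+1)) l]
  have h : ∀ i ∈ Finset.range l, (-1:ℝ)^(i+1+1) * t (i+1+1) = (-1)^i * t (i+2) := by
    intro i _
    rw [show i+1+1 = i+2 from rfl, pow_add]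
    ring
  rw [Finset.sum_congr rfl h]
  ring

lemma alt_nonneg : ∀ (l : ℕ) (t : ℕ → ℝ), (∀ j, t (j+1) ≤ t j) → (∀ j, 0 ≤ t j) →
    0 ≤ ∑ i ∈ Finset.range l, (-1:ℝ)^i * t i := by
  intro l
  induction l using Nat.strong_induction_on with
  | _ l ih =>
    match l with
    | 0 => intro t _ _; simp
    | 1 => intro t _ h0; simpa using h0 0
    | (l+2) =>
      intro t hd h0
      rw [alt_key]
      have h1 := ih l (by omega) (fun i => t (i+2)) (fun j => hd (j+2)) (fun j => h0 (j+2))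
      have h2 := hd 0
      linarith

lemma alt_le (l : ℕ) (t : ℕ → ℝ) (hd : ∀ j, t (j+1) ≤ t j) (h0 : ∀ j, 0 ≤ t j) :
    ∑ i ∈ Finset.range l, (-1:ℝ)^i * t i ≤ t 0 := by
  match l with
  | 0 => exact h0 0
  | (m+1) =>
    rw [Finset.sum_range_succ' (fun i => (-1:ℝ)^i * t i) m]
    have h1 := alt_nonneg m (fun i => t (i+1)) (fun j => hd (j+1)) (fun j => h0 (j+1))
    have h2 : ∑ i ∈ Finset.range m, (-1:ℝ)^(i+1) * t (i+1)
        = -∑ i ∈ Finset.range m, (-1:ℝ)^i * t (i+1) := by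
      rw [← Finset.sum_neg_distrib]
      apply Finset.sum_congr rfl; intro i _; ring
    rw [h2]
    simp only [pow_zero, one_mul]
    linarith

lemma alt_ge (l : ℕ) (t : ℕ → ℝ) (hd : ∀ j, t (j+1) ≤ t j) (h0 : ∀ j, 0 ≤ t j) (hl : 2 ≤ l) :
    t 0 - t 1 ≤ ∑ i ∈ Finset.range l, (-1:ℝ)^i * t i := by
  obtain ⟨m, rfl⟩ : ∃ m, l = m + 2 := ⟨l - 2, by omega⟩
  rw [alt_key]
  have h1 := alt_nonneg m (fun i => t (i+2)) (fun j => hd (j+2)) (fun j => h0 (j+2))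
  linarith



variable {x : ℕ → ℝ}

lemma hrec (hxn : ∀ n : ℕ, 1 ≤ n →
      x n = -∑ j ∈ Finset.Icc 1 n, ((-1 : ℝ) ^ j / ((j.factorial : ℝ)) ^ 2) * x (n - j))
    (n : ℕ) (hn : 1 ≤ n) :
    x n = ∑ i ∈ Finset.range n, (-1:ℝ)^i * (x (n-1-i) / (((i+1).factorial : ℝ))^2) := by
  rw [hxn n hn, show Finset.Icc 1 n = Finset.Ico 1 (n+1) from (Finset.Ico_add_one_right_eq_Icc 1 n),
    Finset.sum_Ico_eq_sum_range]
  simp only [Nat.add_sub_cancel]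
  rw [← Finset.sum_neg_distrib]
  apply Finset.sum_congr rfl
  intro i _
  have h1 : n - (1 + i) = n - 1 - i := by omega
  have h2 : 1 + i = i + 1 := by omega
  rw [h1, h2, pow_succ]
  ring

lemma xprop (hx0 : x 0 = 1)
    (hxn : ∀ n : ℕ, 1 ≤ n →
      x n = -∑ j ∈ Finset.Icc 1 n, ((-1 : ℝ) ^ j / ((j.factorial : ℝ)) ^ 2) * x (n - j)) :
    ∀ n, 0 < x n ∧ x (n+1) ≤ x n ∧ x n ≤ 2 * x (n+1) := by
  intro n
  induction n using Nat.strong_induction_on with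
  | _ n ih =>
    have hpos : ∀ m, m ≤ n → 0 < x m := by
      intro m hm
      rcases Nat.eq_zero_or_pos m with rfl | hm1
      · rw [hx0]; norm_num
      · obtain ⟨m', rfl⟩ : ∃ m', m = m' + 1 := ⟨m - 1, by omega⟩
        have h := ih m' (by omega)
        linarith [h.1, h.2.2]
    have hfact_pos : ∀ k : ℕ, (0:ℝ) < ((k.factorial : ℝ))^2 := fun k => by
      have := k.factorial_pos
      positivity
    set t : ℕ → ℝ := fun i => x (n - i) / (((i+1).factorial : ℝ))^2 with ht
    have h0 : ∀ i, 0 ≤ t i := by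
      intro i
      have := hpos (n - i) (by omega)
      have := hfact_pos (i+1)
      positivity
    have hd : ∀ i, t (i+1) ≤ t i := by
      intro i
      have hff : ((i+1+1).factorial : ℝ) = (i+2) * ((i+1).factorial : ℝ) := by
        rw [show i+1+1 = (i+1)+1 from rfl, Nat.factorial_succ]
        push_cast; ring
      have hf1 : (0:ℝ) < ((i+1).factorial : ℝ)^2 := hfact_pos (i+1)
      have hnum : x (n - (i+1)) ≤ 2 * x (n - i) := by
        rcases Nat.lt_or_ge i n with hi | hi
        · have h := ih (n - i - 1) (by omega)
          have : n - i - 1 + 1 = n - i := by omega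
          rw [this] at h
          have : n - (i+1) = n - i - 1 := by omega
          rw [this]
          exact h.2.2
        · have e1 : n - (i+1) = 0 := by omega
          have e2 : n - i = 0 := by omega
          rw [e1, e2]
          linarith [hpos 0 (Nat.zero_le n)]
      show x (n - (i+1)) / (((i+1+1).factorial : ℝ))^2 ≤ x (n - i) / (((i+1).factorial : ℝ))^2
      rw [hff]
      have hFpos : (0:ℝ) < ((i+1).factorial : ℝ) := by exact_mod_cast (i+1).factorial_pos
      rw [div_le_div_iff₀ (by positivity) hf1]
      have hxi : 0 < x (n - i) := hpos (n - i) (by omega)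
      have h4 : (4:ℝ) ≤ ((i:ℝ)+2)^2 := by nlinarith [Nat.cast_nonneg (α := ℝ) i]
      calc x (n - (i+1)) * ((i+1).factorial : ℝ)^2
          ≤ (2 * x (n - i)) * ((i+1).factorial : ℝ)^2 := by nlinarith
        _ ≤ x (n - i) * (((i:ℝ)+2) * ((i+1).factorial : ℝ))^2 := by
            nlinarith [mul_le_mul_of_nonneg_left h4 (mul_pos hxi hf1).le,
              mul_pow ((i:ℝ)+2) (((i+1).factorial : ℝ)) 2]
    have hxn1 : x (n+1) = ∑ i ∈ Finset.range (n+1), (-1:ℝ)^i * t i := by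
      rw [hrec hxn (n+1) (by omega)]
      apply Finset.sum_congr rfl
      intro i _
      have : n + 1 - 1 - i = n - i := by omega
      rw [this]
    have ht0 : t 0 = x n := by
      simp [ht, Nat.factorial]
    have hupper : x (n+1) ≤ x n := by
      rw [hxn1, ← ht0]
      exact alt_le (n+1) t hd h0
    rcases Nat.eq_zero_or_pos n with rfl | hn1
    · -- n = 0 : x 1 = t 0 = x 0 = 1
      have hx1 : x 1 = x 0 := by
        rw [hxn1]
        simp [ht0]
      rw [hx1, hx0]
      norm_num
    · have hlower : x n - x (n-1) / 4 ≤ x (n+1) := by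
        have ht1 : t 1 = x (n-1) / 4 := by
          simp only [ht]
          norm_num [Nat.factorial]
        rw [hxn1, ← ht0, ← ht1]
        exact alt_ge (n+1) t hd h0 (by omega)
      have hprev := ih (n-1) (by omega)
      have hprev1 : n - 1 + 1 = n := by omega
      rw [hprev1] at hprev
      have hxpos : 0 < x n := hpos n le_rfl
      refine ⟨hxpos, hupper, by linarith [hprev.2.2]⟩


noncomputable def besselFn (t : ℝ) : ℝ :=
  ∑' j : ℕ, ((-1 : ℝ) ^ j * t ^ j / ((j.factorial : ℝ)) ^ 2)

lemma summable_bessel_norm (t : ℝ) :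
    Summable fun j : ℕ => ‖(-1 : ℝ) ^ j * t ^ j / ((j.factorial : ℝ)) ^ 2‖ := by
  apply Summable.of_nonneg_of_le (fun j => norm_nonneg _)
    (fun j => ?_) (Real.summable_pow_div_factorial |t|)
  have h1 : (0:ℝ) < (j.factorial : ℝ) := by exact_mod_cast j.factorial_pos
  have h2 : (j.factorial : ℝ) ≤ (j.factorial : ℝ)^2 := by
    nlinarith [show (1:ℝ) ≤ (j.factorial : ℝ) by exact_mod_cast j.factorial_pos]
  rw [norm_div, norm_mul, norm_pow, norm_pow, norm_neg, norm_one, one_pow, one_mul]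
  simp only [Real.norm_eq_abs, abs_pow, sq_abs, abs_abs]
  exact div_le_div_of_nonneg_left (by positivity) h1 h2
  
lemma summable_bessel (t : ℝ) :
    Summable fun j : ℕ => ((-1 : ℝ) ^ j * t ^ j / ((j.factorial : ℝ)) ^ 2) :=
  (summable_bessel_norm t).of_norm

lemma besselFn_zero : besselFn 0 = 1 := by
  rw [besselFn, tsum_eq_single 0]
  · simp
  · intro j hj
    simp [zero_pow hj]




noncomputable def besselSeries : FormalMultilinearSeries ℝ ℝ ℝ :=
  FormalMultilinearSeries.ofScalars ℝ (fun j => (-1 : ℝ) ^ j / ((j.factorial : ℝ)) ^ 2)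

lemma besselSeries_ball : HasFPowerSeriesOnBall besselFn besselSeries 0 ⊤ := by
  have hrad : besselSeries.radius = ⊤ := by
    apply FormalMultilinearSeries.radius_eq_top_of_summable_norm
    intro r
    have h := summable_bessel_norm (r : ℝ)
    apply Summable.of_nonneg_of_le (fun n => by positivity) (fun n => ?_) h
    rw [besselSeries, FormalMultilinearSeries.ofScalars_norm]
    apply le_of_eq
    simp only [norm_div, norm_mul, norm_pow, norm_neg, norm_one, one_pow, Real.norm_eq_abs]
    rw [abs_of_nonneg (show (0:ℝ) ≤ (r:ℝ) from r.coe_nonneg)]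
    ring
  refine ⟨le_of_eq hrad.symm, ENNReal.zero_lt_top, fun {y} _ => ?_⟩
  have hs := summable_bessel y
  have heq : (fun n => besselSeries n fun _ => y)
      = fun j : ℕ => ((-1 : ℝ) ^ j * y ^ j / ((j.factorial : ℝ)) ^ 2) := by
    funext n
    rw [besselSeries, FormalMultilinearSeries.ofScalars_apply_eq, smul_eq_mul]
    ring
  rw [heq, zero_add, besselFn]
  exact hs.hasSum

lemma analyticAt_besselFn (y : ℝ) : AnalyticAt ℝ besselFn y :=
  besselSeries_ball.analyticAt_of_mem (by simp [EMetric.mem_ball, edist_lt_top])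


lemma shift_rep (x : ℕ → ℝ) (hxpos : ∀ n, 0 < x n) (t₀ : ℝ) (ht₀ : 0 ≤ t₀) (v : ℝ)
    (hsum : Summable fun n => x n * (t₀ + |v|) ^ n) :
    (∀ k : ℕ, Summable fun m : ℕ => (((m+k).choose k : ℝ)) * x (m+k) * t₀ ^ m * v ^ k) ∧
    HasSum (fun k : ℕ => (∑' m : ℕ, (((m+k).choose k : ℝ)) * x (m+k) * t₀ ^ m) * v ^ k)
      (∑' n : ℕ, x n * (t₀ + v) ^ n) := by
  classical
  set G : ℕ × ℕ → ℝ :=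
    fun p => (((p.2+p.1).choose p.1 : ℝ)) * x (p.2+p.1) * t₀ ^ p.2 * v ^ p.1 with hGdef
  have habs : Summable fun p : ℕ × ℕ => |G p| := by
    rw [← Equiv.summable_iff (Finset.HasAntidiagonal.sigmaAntidiagonalEquivProd (A := ℕ))]
    apply (summable_sigma_of_nonneg fun q => abs_nonneg _).mpr
    refine ⟨fun n => .of_finite, ?_⟩
    have hout : ∀ n : ℕ, (∑' p : (Finset.HasAntidiagonal.antidiagonal n : Finset (ℕ × ℕ)),
        |G (Finset.HasAntidiagonal.sigmaAntidiagonalEquivProd ⟨n, p⟩)|) = x n * (t₀ + |v|)^n := by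
      intro n
      have e0 : (∑' p : (Finset.HasAntidiagonal.antidiagonal n : Finset (ℕ × ℕ)),
          |G (Finset.HasAntidiagonal.sigmaAntidiagonalEquivProd ⟨n, p⟩)|)
          = ∑ p ∈ Finset.HasAntidiagonal.antidiagonal n, |G p| := by
        rw [← Finset.tsum_subtype]
        exact tsum_congr fun p => rfl
      rw [e0, Finset.Nat.sum_antidiagonal_eq_sum_range_succ_mk]
      have e1 : ∀ k ∈ Finset.range (n+1),
          |G (k, n-k)| = x n * (|v|^k * t₀^(n-k) * ((n.choose k) : ℝ)) := by
        intro k hk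
        rw [Finset.mem_range] at hk
        have hnk : n - k + k = n := by omega
        simp only [hGdef]
        rw [hnk, abs_mul, abs_of_nonneg (mul_nonneg (mul_nonneg (Nat.cast_nonneg _)
          (hxpos n).le) (pow_nonneg ht₀ _)), abs_pow]
        ring
      rw [Finset.sum_congr rfl e1, ← Finset.mul_sum, ← add_pow]
      ring_nf
    refine hsum.congr fun n => (hout n).symm
  have hGsum : Summable G := summable_abs_iff.mp habs
  have htot : ∑' p : ℕ × ℕ, G p = ∑' n : ℕ, x n * (t₀ + v)^n := by
    have h1 : Summable (fun q : (Σ n : ℕ, (Finset.HasAntidiagonal.antidiagonal n : Finset (ℕ × ℕ))) =>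
        G (Finset.HasAntidiagonal.sigmaAntidiagonalEquivProd q)) :=
      (Equiv.summable_iff (Finset.HasAntidiagonal.sigmaAntidiagonalEquivProd (A := ℕ))).mpr hGsum
    have h2 : ∑' q : (Σ n : ℕ, (Finset.HasAntidiagonal.antidiagonal n : Finset (ℕ × ℕ))),
        G (Finset.HasAntidiagonal.sigmaAntidiagonalEquivProd q) = ∑' p : ℕ × ℕ, G p :=
      Equiv.tsum_eq (Finset.HasAntidiagonal.sigmaAntidiagonalEquivProd (A := ℕ)) G
    rw [← h2, Summable.tsum_sigma h1]
    apply tsum_congr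
    intro n
    have e0 : (∑' p : (Finset.HasAntidiagonal.antidiagonal n : Finset (ℕ × ℕ)),
        G (Finset.HasAntidiagonal.sigmaAntidiagonalEquivProd ⟨n, p⟩))
        = ∑ p ∈ Finset.HasAntidiagonal.antidiagonal n, G p := by
      rw [← Finset.tsum_subtype]
      exact tsum_congr fun p => rfl
    rw [e0, Finset.Nat.sum_antidiagonal_eq_sum_range_succ_mk]
    have e1 : ∀ k ∈ Finset.range (n+1),
        G (k, n-k) = x n * (v^k * t₀^(n-k) * ((n.choose k) : ℝ)) := by
      intro k hk
      rw [Finset.mem_range] at hk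
      have hnk : n - k + k = n := by omega
      simp only [hGdef]
      rw [hnk]
      ring
    rw [Finset.sum_congr rfl e1, ← Finset.mul_sum, ← add_pow]
    ring_nf
  have hGS : HasSum G (∑' n : ℕ, x n * (t₀ + v)^n) := htot ▸ hGsum.hasSum
  refine ⟨fun k => hGsum.prod_factor k, ?_⟩
  apply hGS.prod_fiberwise
  intro k
  have hk := (hGsum.prod_factor k).hasSum
  have e2 : ∑' m : ℕ, G (k, m)
      = (∑' m : ℕ, (((m+k).choose k : ℝ)) * x (m+k) * t₀ ^ m) * v ^ k := by
    simp only [hGdef]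
    exact tsum_mul_right
  rwa [e2] at hk




lemma prodOne (x : ℕ → ℝ) (hx0 : x 0 = 1)
    (hxn : ∀ n : ℕ, 1 ≤ n →
      x n = -∑ j ∈ Finset.Icc 1 n, ((-1 : ℝ) ^ j / ((j.factorial : ℝ)) ^ 2) * x (n - j))
    (hxpos : ∀ n, 0 ≤ x n) (u : ℝ) (hu : 0 ≤ u)
    (hsum : Summable fun n : ℕ => x n * u ^ n) :
    besselFn u * (∑' n : ℕ, x n * u ^ n) = 1 := by
  have hf := summable_bessel_norm u
  have hg : Summable fun n : ℕ => ‖x n * u ^ n‖ :=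
    hsum.congr fun n => (Real.norm_of_nonneg (mul_nonneg (hxpos n) (pow_nonneg hu n))).symm
  rw [besselFn, tsum_mul_tsum_eq_tsum_sum_range_of_summable_norm hf hg]
  have hterm : ∀ n : ℕ, (∑ k ∈ Finset.range (n+1),
      ((-1:ℝ)^k * u^k / ((k.factorial:ℝ))^2) * (x (n-k) * u^(n-k)))
      = if n = 0 then 1 else 0 := by
    intro n
    rcases Nat.eq_zero_or_pos n with rfl | hn
    · simp [hx0]
    · rw [if_neg (by omega)]
      have e1 : ∀ k ∈ Finset.range (n+1),
          ((-1:ℝ)^k * u^k / ((k.factorial:ℝ))^2) * (x (n-k) * u^(n-k))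
          = u^n * (((-1:ℝ)^k / ((k.factorial:ℝ))^2) * x (n-k)) := by
        intro k hk
        rw [Finset.mem_range] at hk
        have hpow : u^k * u^(n-k) = u^n := by
          rw [← pow_add]
          congr 1
          omega
        rw [← hpow]
        ring
      rw [Finset.sum_congr rfl e1, ← Finset.mul_sum]
      have e2 : ∑ k ∈ Finset.range (n+1), ((-1:ℝ)^k / ((k.factorial:ℝ))^2) * x (n-k) = 0 := by
        rw [Finset.sum_range_succ' (fun k => ((-1:ℝ)^k / ((k.factorial:ℝ))^2) * x (n-k)) n]
        have e3 : ∑ i ∈ Finset.range n, ((-1:ℝ)^(i+1) / (((i+1).factorial:ℝ))^2) * x (n-(i+1))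
            = ∑ j ∈ Finset.Icc 1 n, ((-1:ℝ)^j / ((j.factorial:ℝ))^2) * x (n-j) := by
          rw [show Finset.Icc 1 n = Finset.Ico 1 (n+1) from (Finset.Ico_add_one_right_eq_Icc 1 n),
            Finset.sum_Ico_eq_sum_range]
          simp only [Nat.add_sub_cancel]
          apply Finset.sum_congr rfl
          intro i _
          rw [show 1 + i = i + 1 from by omega]
        rw [e3]
        have e4 : ∑ j ∈ Finset.Icc 1 n, ((-1:ℝ)^j / ((j.factorial:ℝ))^2) * x (n-j) = -x n := by
          have := hxn n hn
          linarith
        rw [e4]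
        simp [Nat.factorial]
      rw [e2, mul_zero]
  rw [tsum_congr hterm, tsum_eq_single 0 (fun n hn => by simp [hn])]
  simp





/-- The coefficients of the reciprocal power series of `J₀(2√·)`, defined by `x₀ = 1` and
`xₙ = −∑_{j=1}^{n} ((−1)^j/(j!)²) x_{n−j}`, satisfy: `∑ xₙ sⁿ` converges for `0 ≤ s < r₀`. -/
theorem summable_reciprocal_bessel_coeffs
    (x : ℕ → ℝ) (hx0 : x 0 = 1)
    (hxn : ∀ n : ℕ, 1 ≤ n →
      x n = -∑ j ∈ Finset.Icc 1 n, ((-1 : ℝ) ^ j / ((j.factorial : ℝ)) ^ 2) * x (n - j)) :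
    ∀ s : ℝ, 0 ≤ s → s < r₀ → Summable (fun n : ℕ => x n * s ^ n) := by
  intro s hs0 hsr
  have hxp := xprop hx0 hxn
  have hxpos : ∀ n, 0 < x n := fun n => (hxp n).1
  have hxle1 : ∀ n, x n ≤ 1 := by
    intro n
    induction n with
    | zero => rw [hx0]
    | succ n ih => exact le_trans (hxp n).2.1 ih
  set E : Set ℝ := {u : ℝ | 0 ≤ u ∧ Summable fun n : ℕ => x n * u ^ n} with hE
  have hE0 : (0:ℝ) ∈ E := by
    refine ⟨le_rfl, summable_of_ne_finset_zero (s := {0}) fun n hn => ?_⟩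
    simp only [Finset.mem_singleton] at hn
    simp [zero_pow hn]
  have hEgeo : ∀ u : ℝ, 0 ≤ u → u < 1 → u ∈ E := by
    intro u h0 h1
    refine ⟨h0, Summable.of_nonneg_of_le
      (fun n => mul_nonneg (hxpos n).le (pow_nonneg h0 n)) (fun n => ?_)
      (summable_geometric_of_lt_one h0 h1)⟩
    calc x n * u^n ≤ 1 * u^n :=
          mul_le_mul_of_nonneg_right (hxle1 n) (pow_nonneg h0 n)
      _ = u^n := one_mul _
  have hEbdd : ∀ u ∈ E, u ≤ 2 := by
    intro u hu
    by_contra hu2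
    push_neg at hu2
    have hu0 : (0:ℝ) ≤ u := hu.1
    have hxlow : ∀ n, (1/2:ℝ)^n ≤ x n := by
      intro n
      induction n with
      | zero => rw [hx0]; norm_num
      | succ n ih =>
        have h := (hxp n).2.2
        rw [pow_succ]
        linarith
    have hge1 : ∀ n, (1:ℝ) ≤ x n * u^n := by
      intro n
      have h1 : (u/2)^n ≤ x n * u^n := by
        have : (u/2)^n = (1/2)^n * u^n := by
          rw [← mul_pow]; ring_nf
        rw [this]
        exact mul_le_mul_of_nonneg_right (hxlow n) (pow_nonneg hu0 n)
      have h2 : (1:ℝ) ≤ (u/2)^n := one_le_pow₀ (by linarith)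
      linarith
    have hterm := hu.2.tendsto_atTop_zero
    have hev := hterm.eventually_lt_const (by norm_num : (0:ℝ) < 1)
    obtain ⟨n, hn⟩ := hev.exists
    linarith [hge1 n]
  set R := sSup E with hR
  have hEne : E.Nonempty := ⟨0, hE0⟩
  have hbdd : BddAbove E := ⟨2, fun u hu => hEbdd u hu⟩
  have hR0 : 0 ≤ R := le_csSup hbdd hE0
  have hR1 : 1 ≤ R := by
    by_contra h
    push_neg at h
    have hmem : (R+1)/2 ∈ E := hEgeo _ (by linarith) (by linarith)
    have := le_csSup hbdd hmem
    linarith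
  have hsummlt : ∀ u : ℝ, 0 ≤ u → u < R → Summable fun n : ℕ => x n * u ^ n := by
    intro u h0 hu
    obtain ⟨w, hwE, hw⟩ := exists_lt_of_lt_csSup hEne hu
    exact Summable.of_nonneg_of_le (fun n => mul_nonneg (hxpos n).le (pow_nonneg h0 n))
      (fun n => mul_le_mul_of_nonneg_left (pow_le_pow_left₀ h0 hw.le n) (hxpos n).le) hwE.2
  by_cases hcase : s < R
  · exact hsummlt s hs0 hcase
  exfalso
  push_neg at hcase
  have hRr₀ : R < r₀ := lt_of_le_of_lt hcase hsr
  have hne : ∀ t : ℝ, 0 ≤ t → t < r₀ → besselFn t ≠ 0 := by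
    intro t h0 htr
    rcases eq_or_lt_of_le h0 with h | hpos
    · rw [← h, besselFn_zero]; norm_num
    · intro hzero
      have hler : r₀ ≤ t := by
        apply csInf_le ⟨0, fun y hy => hy.1.le⟩
        exact ⟨hpos, hzero⟩
      linarith
  have hfRne : besselFn R ≠ 0 := hne R (by linarith) hRr₀
  have hAn : AnalyticAt ℝ (fun w => (besselFn w)⁻¹) R := (analyticAt_besselFn R).inv hfRne
  obtain ⟨q, hq⟩ := hAn
  obtain ⟨rq, hrq⟩ := hq
  have hrqpos : 0 < rq := hrq.r_pos
  obtain ⟨δ, hδ0, hδhalf, hδle⟩ : ∃ δ : ℝ, 0 < δ ∧ δ ≤ 1/2 ∧ ENNReal.ofReal δ ≤ rq := by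
    rcases eq_or_ne rq ⊤ with h | h
    · exact ⟨1/2, by norm_num, le_rfl, by simp [h]⟩
    · have htr : 0 < rq.toReal := ENNReal.toReal_pos hrqpos.ne' h
      refine ⟨min (rq.toReal/2) (1/2), by positivity, min_le_right _ _, ?_⟩
      apply ENNReal.ofReal_le_of_le_toReal
      calc min (rq.toReal/2) (1/2) ≤ rq.toReal/2 := min_le_left _ _
        _ ≤ rq.toReal := by linarith
  have hqball : HasFPowerSeriesOnBall (fun w => (besselFn w)⁻¹) q R (ENNReal.ofReal δ) :=
    hrq.mono (by simp [ENNReal.ofReal_pos, hδ0]) hδle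
  set t₀ : ℝ := R - δ/4 with ht₀
  have ht₀pos : 0 < t₀ := by rw [ht₀]; linarith
  have ht₀lt : t₀ < R := by rw [ht₀]; linarith
  set y : ℝ := -(δ/4) with hy
  have hynorm : (‖y‖₊ : ℝ≥0∞) = ENNReal.ofReal (δ/4) := by
    rw [hy, nnnorm_neg, ← enorm_eq_nnnorm, Real.enorm_eq_ofReal (by positivity)]
  have hylt : (‖y‖₊ : ℝ≥0∞) < ENNReal.ofReal δ := by
    rw [hynorm]
    exact (ENNReal.ofReal_lt_ofReal_iff hδ0).mpr (by linarith)
  have hqco := hqball.changeOrigin hylt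
  rw [show R + y = t₀ from by rw [hy, ht₀]; ring] at hqco
  have hsub : ENNReal.ofReal δ - (‖y‖₊ : ℝ≥0∞) = ENNReal.ofReal (3*δ/4) := by
    rw [hynorm, ← ENNReal.ofReal_sub _ (by positivity)]
    congr 1
    ring
  rw [hsub] at hqco
  set c : ℕ → ℝ := fun k => ∑' m : ℕ, (((m+k).choose k : ℝ)) * x (m+k) * t₀ ^ m with hc
  have hcnn : ∀ k, 0 ≤ c k := fun k => tsum_nonneg fun m =>
    mul_nonneg (mul_nonneg (Nat.cast_nonneg _) (hxpos _).le) (pow_nonneg ht₀pos.le m)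
  have hsumbase : ∀ v : ℝ, |v| < δ/4 → Summable fun n : ℕ => x n * (t₀ + |v|)^n := by
    intro v hv
    exact hsummlt _ (by positivity) (by rw [ht₀]; linarith)
  have hfib : ∀ k : ℕ, Summable fun m : ℕ => (((m+k).choose k : ℝ)) * x (m+k) * t₀ ^ m := by
    intro k
    have habs : |δ/16| < δ/4 := by rw [abs_of_pos (by positivity)]; linarith
    have h := (shift_rep x hxpos t₀ ht₀pos.le (δ/16) (hsumbase _ habs)).1 k
    have h2 := h.mul_right (((δ/16:ℝ)^k)⁻¹)
    refine h2.congr fun m => ?_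
    have : ((δ/16:ℝ)^k) ≠ 0 := by positivity
    field_simp
  have hrep : ∀ v : ℝ, |v| < δ/16 → HasSum (fun k : ℕ => c k * v ^ k) ((besselFn (t₀ + v))⁻¹) := by
    intro v hv
    have habs : |v| < δ/4 := by linarith
    have h2 := (shift_rep x hxpos t₀ ht₀pos.le v (hsumbase v habs)).2
    have hu0 : 0 ≤ t₀ + v := by
      have := neg_abs_le v
      rw [ht₀]; linarith
    have huR : t₀ + v < R := by
      have := le_abs_self v
      rw [ht₀]; linarith
    have hsumu := hsummlt (t₀+v) hu0 huR
    have hprod := prodOne x hx0 hxn (fun n => (hxpos n).le) (t₀+v) hu0 hsumu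
    have hinv : (∑' n : ℕ, x n * (t₀+v)^n) = (besselFn (t₀+v))⁻¹ :=
      eq_inv_of_mul_eq_one_left (by linarith [hprod])
    rw [← hinv]
    exact h2
  set P := FormalMultilinearSeries.ofScalars ℝ c with hP
  have hPnorm : ∀ k, ‖P k‖ = c k := fun k => by
    rw [hP, FormalMultilinearSeries.ofScalars_norm, Real.norm_eq_abs, abs_of_nonneg (hcnn k)]
  have hPball : HasFPowerSeriesOnBall (fun w => (besselFn w)⁻¹) P t₀ (ENNReal.ofReal (δ/32)) := by
    have hsum32 : Summable fun k => c k * (δ/32)^k :=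
      (hrep (δ/32) (by rw [abs_of_pos (by positivity)]; linarith)).summable
    constructor
    · show ENNReal.ofReal (δ/32) ≤ P.radius
      have : ((δ/32:ℝ).toNNReal : ℝ≥0∞) ≤ P.radius := by
        apply P.le_radius_of_summable_norm
        refine hsum32.congr fun k => ?_
        rw [hPnorm, Real.coe_toNNReal _ (by positivity)]
      rwa [ENNReal.ofReal]
    · exact ENNReal.ofReal_pos.mpr (by positivity)
    · intro v hv
      have hvlt : |v| < δ/32 := by
        rw [EMetric.mem_ball, edist_eq_enorm_sub, sub_zero,
          Real.enorm_eq_ofReal_abs] at hv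
        exact (ENNReal.ofReal_lt_ofReal_iff_of_nonneg (abs_nonneg v)).mp hv
      have h := hrep v (by linarith)
      have heq : (fun k => P k fun _ => v) = fun k => c k * v^k := by
        funext k
        rw [hP, FormalMultilinearSeries.ofScalars_apply_eq, smul_eq_mul]
      rw [heq]
      exact h
  have hPQ : P = q.changeOrigin y :=
    hPball.hasFPowerSeriesAt.eq_formalMultilinearSeries hqco.hasFPowerSeriesAt
  have hPrad : ENNReal.ofReal (3*δ/4) ≤ P.radius := hPQ ▸ hqco.r_le
  have hlt : (((δ/2:ℝ).toNNReal : ℝ≥0) : ℝ≥0∞) < P.radius := by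
    apply lt_of_lt_of_le ?_ hPrad
    rw [show (((δ/2:ℝ).toNNReal : ℝ≥0) : ℝ≥0∞) = ENNReal.ofReal (δ/2) from rfl]
    exact (ENNReal.ofReal_lt_ofReal_iff (by positivity)).mpr (by linarith)
  have hsum2 : Summable fun k => c k * (δ/2)^k := by
    have h := P.summable_norm_mul_pow hlt
    refine h.congr fun k => ?_
    rw [hPnorm, Real.coe_toNNReal _ (by positivity)]
  set u : ℝ := t₀ + δ/2 with hu
  set B := ∑' k : ℕ, c k * (δ/2)^k with hB
  have hpartial : ∀ N : ℕ, ∑ n ∈ Finset.range N, x n * u^n ≤ B := by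
    intro N
    have step1 : ∀ n : ℕ, x n * u^n = ∑ p ∈ Finset.HasAntidiagonal.antidiagonal n,
        (((p.2+p.1).choose p.1:ℝ)) * x (p.2+p.1) * t₀^p.2 * (δ/2)^p.1 := by
      intro n
      rw [Finset.Nat.sum_antidiagonal_eq_sum_range_succ_mk]
      have e1 : ∀ k ∈ Finset.range (n+1),
          (((n-k+k).choose k:ℝ)) * x (n-k+k) * t₀^(n-k) * (δ/2)^k
          = x n * ((δ/2)^k * t₀^(n-k) * ((n.choose k):ℝ)) := by
        intro k hk
        rw [Finset.mem_range] at hk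
        have hnk : n - k + k = n := by omega
        rw [hnk]
        ring
      rw [Finset.sum_congr rfl e1, ← Finset.mul_sum, ← add_pow]
      rw [hu]
      ring_nf
    rw [Finset.sum_congr rfl (fun n _ => step1 n)]
    have hdisj : (Finset.range N : Set ℕ).PairwiseDisjoint Finset.HasAntidiagonal.antidiagonal := by
      intro a _ b _ hab
      apply Finset.disjoint_left.mpr
      intro p hpa hpb
      rw [Finset.HasAntidiagonal.mem_antidiagonal] at hpa hpb
      exact hab (hpa ▸ hpb ▸ rfl)
    rw [← Finset.sum_biUnion hdisj]
    have hnonneg : ∀ p : ℕ × ℕ,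
        0 ≤ (((p.2+p.1).choose p.1:ℝ)) * x (p.2+p.1) * t₀^p.2 * (δ/2)^p.1 := fun p => by
      have := (hxpos (p.2+p.1)).le
      positivity
    have hsubset : (Finset.range N).biUnion Finset.HasAntidiagonal.antidiagonal
        ⊆ Finset.range N ×ˢ Finset.range N := by
      intro p hp
      rw [Finset.mem_biUnion] at hp
      obtain ⟨n, hn, hpn⟩ := hp
      rw [Finset.mem_range] at hn
      rw [Finset.HasAntidiagonal.mem_antidiagonal] at hpn
      rw [Finset.mem_product, Finset.mem_range, Finset.mem_range]
      omega
    apply le_trans (Finset.sum_le_sum_of_subset_of_nonneg hsubset fun p _ _ => hnonneg p)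
    rw [Finset.sum_product]
    have hinner : ∀ k ∈ Finset.range N,
        ∑ m ∈ Finset.range N, (((m+k).choose k:ℝ)) * x (m+k) * t₀^m * (δ/2)^k
        ≤ c k * (δ/2)^k := by
      intro k _
      rw [← Finset.sum_mul]
      apply mul_le_mul_of_nonneg_right ?_ (by positivity)
      exact Summable.sum_le_tsum (Finset.range N) (fun m _ => mul_nonneg (mul_nonneg
        (Nat.cast_nonneg _) (hxpos _).le) (pow_nonneg ht₀pos.le m)) (hfib k)
    apply le_trans (Finset.sum_le_sum hinner)
    exact Summable.sum_le_tsum (Finset.range N) (fun k _ =>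
      mul_nonneg (hcnn k) (by positivity)) hsum2
  have husum : Summable fun n : ℕ => x n * u^n :=
    summable_of_sum_range_le (fun n => mul_nonneg (hxpos n).le
      (pow_nonneg (by rw [hu]; linarith) n)) hpartial
  have huE : u ∈ E := ⟨by rw [hu]; linarith, husum⟩
  have hle := le_csSup hbdd huE
  rw [hu, ht₀] at hle
  linarith
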